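/- Let x_1,...,x_N : [0,∞) → ℝ^d be a solution of the first-order cooperative system with communication failures (fixed scaling). Then the diameter D(t) := max_{i,j ∈ {1,...,N}} |x_i(t) − x_j(t)| is non-increasing on [0,∞). -/

import Mathlib

open MeasureTheory Set Filter

open scoped RealInnerProductSpace

set_option maxHeartbeats 1000000 in
/-- Core lemma: along the dynamics, the maximum over `i` of `⟪ℓ, x i u⟫` is
non-increasing in `u` on `[0, ∞)`, for any fixed vector `ℓ`. -/
lemma core_mono
    (d N : ℕ) (hN : 2 ≤ N)
    (φ : ℝ → ℝ) (K : NNReal) (hφ_lip : LipschitzOnWith K φ (Ici 0))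
    (hφ_pos : ∀ r : ℝ, 0 ≤ r → 0 < φ r)
    (M : Fin N → Fin N → ℝ → ℝ)
    (hM_meas : ∀ i j, Measurable (M i j))
    (hM_range : ∀ i j, ∀ t : ℝ, 0 ≤ t → M i j t ∈ Icc (0:ℝ) 1)
    (x : Fin N → ℝ → EuclideanSpace ℝ (Fin d))
    (hx_cont : ∀ i, ContinuousOn (x i) (Ici 0))
    (hx_sol : ∀ i, ∀ t : ℝ, 0 ≤ t → x i t = x i 0 +
      ∫ s in (0:ℝ)..t,
        (N : ℝ)⁻¹ • ∑ j, (M i j s * φ ‖x i s - x j s‖) • (x j s - x i s))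
    (ℓ : EuclideanSpace ℝ (Fin d))
    (s t : ℝ) (hs : 0 ≤ s) (hst : s ≤ t)
    (Hne : (Finset.univ : Finset (Fin N)).Nonempty) :
    Finset.univ.sup' Hne (fun i => ⟪ℓ, x i t⟫) ≤
      Finset.univ.sup' Hne (fun i => ⟪ℓ, x i s⟫) := by
  obtain ⟨i0, -⟩ := id Hne
  have ht0 : 0 ≤ t := hs.trans hst
  have hNpos : (0:ℝ) < N := by exact_mod_cast Nat.lt_of_lt_of_le (by norm_num) hN
  set g : Fin N → ℝ → ℝ := fun i u => ⟪ℓ, x i u⟫ with hg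
  have hgc : ∀ i, ContinuousOn (g i) (Ici 0) := fun i =>
    continuousOn_const.inner (hx_cont i)
  -- a bound on the states on [0, t]
  have hRex : ∀ i : Fin N, ∃ R, ∀ σ ∈ Icc (0:ℝ) t, ‖x i σ‖ ≤ R := fun i =>
    isCompact_Icc.exists_bound_of_continuousOn
      ((hx_cont i).mono (fun u hu => hu.1))
  choose B hB using hRex
  set R : ℝ := 1 + Finset.univ.sup' Hne B with hRdef
  have hR : ∀ i, ∀ σ ∈ Icc (0:ℝ) t, ‖x i σ‖ ≤ R := by
    intro i σ hσ
    have h1 : B i ≤ Finset.univ.sup' Hne B := Finset.le_sup' B (Finset.mem_univ i)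
    have := hB i σ hσ
    rw [hRdef]; linarith
  have hR0 : 0 ≤ R := le_trans (norm_nonneg _) (hR i0 0 ⟨le_rfl, ht0⟩)
  set C : ℝ := φ 0 + K * (2 * R) with hCdef
  have hφ0 : 0 < φ 0 := hφ_pos 0 le_rfl
  have hC0 : 0 < C := by
    have : (0:ℝ) ≤ K * (2 * R) := by positivity
    rw [hCdef]; linarith
  set w : Fin N → Fin N → ℝ → ℝ :=
    fun i j σ => M i j σ * φ ‖x i σ - x j σ‖ with hw
  have hw01 : ∀ i j σ, σ ∈ Icc (0:ℝ) t → 0 ≤ w i j σ ∧ w i j σ ≤ C := by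
    intro i j σ hσ
    have hM := hM_range i j σ hσ.1
    have hnn : (0:ℝ) ≤ ‖x i σ - x j σ‖ := norm_nonneg _
    have hφp := (hφ_pos _ hnn).le
    have hnorm : ‖x i σ - x j σ‖ ≤ 2 * R := by
      calc ‖x i σ - x j σ‖ ≤ ‖x i σ‖ + ‖x j σ‖ := norm_sub_le _ _
        _ ≤ R + R := add_le_add (hR i σ hσ) (hR j σ hσ)
        _ = 2 * R := by ring
    have hφC : φ ‖x i σ - x j σ‖ ≤ C := by
      have hd := (lipschitzOnWith_iff_dist_le_mul.mp hφ_lip)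
        ‖x i σ - x j σ‖ (mem_Ici.mpr hnn) 0 self_mem_Ici
      rw [Real.dist_eq, Real.dist_eq, sub_zero, abs_of_nonneg hnn] at hd
      have habs := abs_le.mp hd
      have hKnn : (0:ℝ) ≤ (K:ℝ) := K.2
      have : (K:ℝ) * ‖x i σ - x j σ‖ ≤ (K:ℝ) * (2 * R) :=
        mul_le_mul_of_nonneg_left hnorm hKnn
      rw [hCdef]; linarith [habs.2]
    refine ⟨mul_nonneg hM.1 hφp, ?_⟩
    calc M i j σ * φ ‖x i σ - x j σ‖ ≤ 1 * φ ‖x i σ - x j σ‖ :=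
          mul_le_mul_of_nonneg_right hM.2 hφp
      _ = φ ‖x i σ - x j σ‖ := one_mul _
      _ ≤ C := hφC
  set F : Fin N → ℝ → EuclideanSpace ℝ (Fin d) :=
    fun i σ => (N:ℝ)⁻¹ • ∑ j, (w i j σ) • (x j σ - x i σ) with hF
  -- measurability
  have hxm : ∀ j, AEStronglyMeasurable (x j) (volume.restrict (Ioc 0 t)) := by
    intro j
    have h1 : AEMeasurable (x j) (volume.restrict (Ici 0)) :=
      (hx_cont j).aemeasurable measurableSet_Ici
    exact aestronglyMeasurable_iff_aemeasurable.mpr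
      (h1.mono_measure (Measure.restrict_mono (fun u (hu : u ∈ Ioc (0:ℝ) t) => le_of_lt hu.1) le_rfl))
  have hwm : ∀ i j, AEStronglyMeasurable (w i j) (volume.restrict (Ioc 0 t)) := by
    intro i j
    have hφc : ContinuousOn (fun σ => φ ‖x i σ - x j σ‖) (Ici 0) :=
      hφ_lip.continuousOn.comp (((hx_cont i).sub (hx_cont j)).norm)
        (fun σ _ => norm_nonneg _)
    have h2 : AEMeasurable (fun σ => φ ‖x i σ - x j σ‖) (volume.restrict (Ici 0)) :=
      hφc.aemeasurable measurableSet_Ici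
    have h3 : AEStronglyMeasurable (fun σ => φ ‖x i σ - x j σ‖)
        (volume.restrict (Ioc 0 t)) :=
      aestronglyMeasurable_iff_aemeasurable.mpr
        (h2.mono_measure (Measure.restrict_mono (fun u (hu : u ∈ Ioc (0:ℝ) t) => le_of_lt hu.1) le_rfl))
    exact ((hM_meas i j).aestronglyMeasurable).mul h3
  have hFm : ∀ i, AEStronglyMeasurable (F i) (volume.restrict (Ioc 0 t)) := by
    intro i
    apply AEStronglyMeasurable.fun_const_smul
    apply Finset.aestronglyMeasurable_fun_sum
    intro j _
    exact (hwm i j).smul ((hxm j).sub (hxm i))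
  -- boundedness and integrability
  have hFb : ∀ i, ∀ σ ∈ Icc (0:ℝ) t, ‖F i σ‖ ≤ C * (2 * R) := by
    intro i σ hσ
    have hterm : ∀ j : Fin N, ‖(w i j σ) • (x j σ - x i σ)‖ ≤ C * (2 * R) := by
      intro j
      rw [norm_smul]
      have hwj := hw01 i j σ hσ
      have hnorm : ‖x j σ - x i σ‖ ≤ 2 * R := by
        calc ‖x j σ - x i σ‖ ≤ ‖x j σ‖ + ‖x i σ‖ := norm_sub_le _ _
          _ ≤ R + R := add_le_add (hR j σ hσ) (hR i σ hσ)
          _ = 2 * R := by ring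
      rw [Real.norm_eq_abs, abs_of_nonneg hwj.1]
      exact mul_le_mul hwj.2 hnorm (norm_nonneg _) hC0.le
    calc ‖F i σ‖ = ‖(N:ℝ)⁻¹‖ * ‖∑ j, (w i j σ) • (x j σ - x i σ)‖ := norm_smul _ _
      _ ≤ (N:ℝ)⁻¹ * ∑ j, ‖(w i j σ) • (x j σ - x i σ)‖ := by
          rw [norm_inv, Real.norm_natCast]
          exact mul_le_mul_of_nonneg_left (norm_sum_le _ _) (by positivity)
      _ ≤ (N:ℝ)⁻¹ * ∑ _j : Fin N, C * (2 * R) := by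
          refine mul_le_mul_of_nonneg_left ?_ (by positivity)
          exact Finset.sum_le_sum fun j _ => hterm j
      _ = (N:ℝ)⁻¹ * ((N:ℝ) * (C * (2 * R))) := by
          rw [Finset.sum_const, Finset.card_univ, Fintype.card_fin, nsmul_eq_mul]
      _ = C * (2 * R) := by field_simp
  have hFint : ∀ i, IntervalIntegrable (F i) volume 0 t := by
    intro i
    rw [intervalIntegrable_iff, uIoc_of_le ht0]
    refine Integrable.mono' (integrable_const (C * (2 * R))) (hFm i) ?_
    refine (ae_restrict_iff' measurableSet_Ioc).mpr (ae_of_all _ fun σ hσ => ?_)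
    exact hFb i σ ⟨hσ.1.le, hσ.2⟩
  have hFint' : ∀ i a b, 0 ≤ a → a ≤ t → 0 ≤ b → b ≤ t →
      IntervalIntegrable (F i) volume a b := by
    intro i a b h1 h2 h3 h4
    refine (hFint i).mono_set ?_
    exact uIcc_subset_uIcc (by rw [uIcc_of_le ht0]; exact ⟨h1, h2⟩)
      (by rw [uIcc_of_le ht0]; exact ⟨h3, h4⟩)
  have hGint : ∀ i a b, 0 ≤ a → a ≤ t → 0 ≤ b → b ≤ t →
      IntervalIntegrable (fun σ => ⟪ℓ, F i σ⟫) volume a b := by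
    intro i a b h1 h2 h3 h4
    have h5 := hFint' i a b h1 h2 h3 h4
    rw [intervalIntegrable_iff] at h5 ⊢
    have := (innerSL ℝ ℓ).integrable_comp h5
    simp at this; exact this
  -- integral representation of g
  have hrep : ∀ i a b, 0 ≤ a → a ≤ b → b ≤ t →
      g i b - g i a = ∫ σ in a..b, ⟪ℓ, F i σ⟫ := by
    intro i a b ha hab hbt
    have hat' : a ≤ t := hab.trans hbt
    have hb0 : 0 ≤ b := ha.trans hab
    have hxa := hx_sol i a ha
    have hxb := hx_sol i b hb0
    have hsub : x i b - x i a = ∫ σ in a..b, F i σ := by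
      rw [hxb, hxa]
      have h := intervalIntegral.integral_interval_sub_left
        (hFint' i 0 b le_rfl ht0 hb0 hbt) (hFint' i 0 a le_rfl ht0 ha hat')
      rw [← h]
      abel
    have hcomm := (innerSL ℝ ℓ).intervalIntegral_comp_comm
      (hFint' i a b ha hat' hb0 hbt)
    calc g i b - g i a = ⟪ℓ, x i b - x i a⟫ := (inner_sub_right _ _ _).symm
      _ = ⟪ℓ, ∫ σ in a..b, F i σ⟫ := by rw [hsub]
      _ = ∫ σ in a..b, ⟪ℓ, F i σ⟫ := by
          simpa using hcomm.symm
  -- main argument, by contradiction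
  by_contra hcon
  push_neg at hcon
  set A : ℝ := Finset.univ.sup' Hne (fun i => g i s) with hA
  set Ltop : ℝ := Finset.univ.sup' Hne (fun i => g i t) with hLt
  have hgsA : ∀ i, g i s ≤ A := by
    intro i
    rw [hA]
    exact Finset.le_sup' (fun i => g i s) (Finset.mem_univ i)
  have htop : ∃ i, g i t = Ltop := by
    obtain ⟨i, _, hi⟩ := Finset.exists_mem_eq_sup' Hne (fun i => g i t)
    exact ⟨i, hi.symm⟩
  have hsub_Ici : Icc s t ⊆ Ici (0:ℝ) := fun u hu => hs.trans hu.1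
  set S : ℝ → Set ℝ := fun L => {u ∈ Icc s t | ∃ i, L ≤ g i u} with hSdef
  have hSclosed : ∀ L, IsClosed (S L) := by
    intro L
    have hEq : S L = ⋃ i, (Icc s t ∩ (g i) ⁻¹' (Ici L)) := by
      ext u
      simp only [hSdef, mem_setOf_eq, mem_iUnion, mem_inter_iff, mem_preimage,
        mem_Ici]
      tauto
    rw [hEq]
    exact isClosed_iUnion_of_finite fun i =>
      ((hgc i).mono hsub_Ici).preimage_isClosed_of_isClosed isClosed_Icc isClosed_Ici
  have hSbdd : ∀ L, BddBelow (S L) := fun L => ⟨s, fun u hu => hu.1.1⟩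
  have hSne : ∀ L, L ≤ Ltop → t ∈ S L := by
    intro L hL
    obtain ⟨i, hi⟩ := htop
    exact ⟨⟨hst, le_rfl⟩, ⟨i, by rw [hi]; exact hL⟩⟩
  set τ : ℝ → ℝ := fun L => sInf (S L) with hτdef
  have hτmem : ∀ L, L ≤ Ltop → τ L ∈ S L := fun L hL =>
    (hSclosed L).csInf_mem ⟨t, hSne L hL⟩ (hSbdd L)
  have hτIcc : ∀ L, L ≤ Ltop → τ L ∈ Icc s t := fun L hL => (hτmem L hL).1
  have hbefore : ∀ L, L ≤ Ltop → ∀ σ, s ≤ σ → σ < τ L → ∀ i, g i σ < L := by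
    intro L hL σ hsσ hστ i
    by_contra hge
    push_neg at hge
    have hσS : σ ∈ S L := ⟨⟨hsσ, hστ.le.trans (hτIcc L hL).2⟩, ⟨i, hge⟩⟩
    exact absurd (csInf_le (hSbdd L) hσS) (not_le.mpr hστ)
  have hat : ∀ L, A < L → L ≤ Ltop → ∀ i, g i (τ L) ≤ L := by
    intro L hAL hL i
    rcases eq_or_lt_of_le (hτIcc L hL).1 with heq | hlt
    · rw [← heq]; exact (hgsA i).trans hAL.le
    · have hne : s ≠ τ L := ne_of_lt hlt
      have hclos : τ L ∈ closure (Ico s (τ L)) := by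
        rw [closure_Ico hne]; exact ⟨hlt.le, le_rfl⟩
      haveI := mem_closure_iff_nhdsWithin_neBot.mp hclos
      have hτ0 : τ L ∈ Ici (0:ℝ) := hs.trans (hτIcc L hL).1
      have hcw : ContinuousWithinAt (g i) (Ico s (τ L)) (τ L) :=
        ((hgc i).continuousWithinAt hτ0).mono (fun u hu => hs.trans hu.1)
      refine le_of_tendsto hcw ?_
      filter_upwards [self_mem_nhdsWithin] with σ hσ
      exact (hbefore L hL σ hσ.1 hσ.2 i).le
  -- the step lemma: climbing any positive level gap costs at least 1/C time
  have step : ∀ L₁ L₂, A < L₁ → L₁ < L₂ → L₂ ≤ Ltop → τ L₁ + 1/C ≤ τ L₂ := by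
    intro L₁ L₂ hAL₁ hL12 hL2top
    have hAL₂ : A < L₂ := hAL₁.trans hL12
    obtain ⟨⟨hsτ2, hτ2t⟩, i, hi⟩ := hτmem L₂ hL2top
    set S' : Set ℝ := {σ ∈ Icc s (τ L₂) | g i σ ≤ L₁} with hS'def
    have hS'closed : IsClosed S' := by
      have hEq : S' = Icc s (τ L₂) ∩ (g i) ⁻¹' (Iic L₁) := by
        ext u; simp [hS'def]
      rw [hEq]
      exact ((hgc i).mono (fun u hu => hs.trans hu.1)).preimage_isClosed_of_isClosed
        isClosed_Icc isClosed_Iic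
    have hsS' : s ∈ S' := ⟨⟨le_rfl, hsτ2⟩, (hgsA i).trans hAL₁.le⟩
    have hS'bdd : BddAbove S' := ⟨τ L₂, fun u hu => hu.1.2⟩
    set t' : ℝ := sSup S' with ht'def
    have ht'mem : t' ∈ S' := hS'closed.csSup_mem ⟨s, hsS'⟩ hS'bdd
    obtain ⟨⟨hst', ht'τ2⟩, hgt'⟩ := ht'mem
    have ht'lt : t' < τ L₂ := by
      rcases eq_or_lt_of_le ht'τ2 with heq | hlt
      · exfalso; rw [heq] at hgt'; linarith
      · exact hlt
    have hafter : ∀ σ, t' < σ → σ ≤ τ L₂ → L₁ < g i σ := by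
      intro σ h1 h2
      by_contra hle
      push_neg at hle
      have : σ ∈ S' := ⟨⟨hst'.trans h1.le, h2⟩, hle⟩
      exact absurd (le_csSup hS'bdd this) (not_le.mpr h1)
    have hget' : L₁ ≤ g i t' := by
      have hclos : t' ∈ closure (Ioc t' (τ L₂)) := by
        rw [closure_Ioc (ne_of_lt ht'lt)]; exact ⟨le_rfl, ht'lt.le⟩
      haveI := mem_closure_iff_nhdsWithin_neBot.mp hclos
      have ht'0 : t' ∈ Ici (0:ℝ) := hs.trans hst'
      have hcw : ContinuousWithinAt (g i) (Ioc t' (τ L₂)) t' :=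
        ((hgc i).continuousWithinAt ht'0).mono
          (fun u hu => (hs.trans hst').trans hu.1.le)
      refine ge_of_tendsto hcw ?_
      filter_upwards [self_mem_nhdsWithin] with σ hσ
      exact (hafter σ hσ.1 hσ.2).le
    have hτ1t' : τ L₁ ≤ t' := by
      by_contra hlt'
      push_neg at hlt'
      set σ : ℝ := (t' + min (τ L₁) (τ L₂)) / 2 with hσdef
      have hmin : t' < min (τ L₁) (τ L₂) := lt_min hlt' ht'lt
      have h1 : t' < σ := by rw [hσdef]; linarith
      have h2 : σ < min (τ L₁) (τ L₂) := by rw [hσdef]; linarith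
      have h2a : σ < τ L₁ := h2.trans_le (min_le_left _ _)
      have h2b : σ < τ L₂ := h2.trans_le (min_le_right _ _)
      have hσS : σ ∈ S L₁ :=
        ⟨⟨hst'.trans h1.le, h2b.le.trans hτ2t⟩, ⟨i, (hafter σ h1 h2b.le).le⟩⟩
      exact absurd (csInf_le (hSbdd L₁) hσS) (not_le.mpr h2a)
    have h0t' : 0 ≤ t' := hs.trans hst'
    have hbound : ∀ σ ∈ Icc t' (τ L₂), ⟪ℓ, F i σ⟫ ≤ C * (L₂ - L₁) := by
      intro σ hσ
      have hσ0t : σ ∈ Icc (0:ℝ) t := ⟨h0t'.trans hσ.1, hσ.2.trans hτ2t⟩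
      have hgiσ : L₁ ≤ g i σ := by
        rcases eq_or_lt_of_le hσ.1 with he | hl
        · rw [← he]; exact hget'
        · exact (hafter σ hl hσ.2).le
      have hgjσ : ∀ j, g j σ ≤ L₂ := by
        intro j
        rcases eq_or_lt_of_le hσ.2 with he | hl
        · rw [he]; exact hat L₂ hAL₂ hL2top j
        · exact (hbefore L₂ hL2top σ (hst'.trans hσ.1) hl j).le
      have hexp : ⟪ℓ, F i σ⟫ = (N:ℝ)⁻¹ * ∑ j, w i j σ * (g j σ - g i σ) := by
        rw [hF]
        rw [real_inner_smul_right, inner_sum]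
        congr 1
        refine Finset.sum_congr rfl fun j _ => ?_
        rw [real_inner_smul_right, inner_sub_right]
      rw [hexp]
      have hterm : ∀ j : Fin N, w i j σ * (g j σ - g i σ) ≤ C * (L₂ - L₁) := by
        intro j
        have hwj := hw01 i j σ hσ0t
        have hδ : g j σ - g i σ ≤ L₂ - L₁ := by
          have := hgjσ j; linarith
        rcases le_or_gt (g j σ - g i σ) 0 with hneg | hpos
        · have h1 : w i j σ * (g j σ - g i σ) ≤ 0 :=
            mul_nonpos_of_nonneg_of_nonpos hwj.1 hneg
          have h2 : (0:ℝ) ≤ C * (L₂ - L₁) := by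
            have : (0:ℝ) ≤ L₂ - L₁ := by linarith
            positivity
          linarith
        · calc w i j σ * (g j σ - g i σ) ≤ C * (g j σ - g i σ) :=
              mul_le_mul_of_nonneg_right hwj.2 hpos.le
            _ ≤ C * (L₂ - L₁) := mul_le_mul_of_nonneg_left hδ hC0.le
      calc (N:ℝ)⁻¹ * ∑ j, w i j σ * (g j σ - g i σ)
          ≤ (N:ℝ)⁻¹ * ∑ _j : Fin N, C * (L₂ - L₁) := by
            refine mul_le_mul_of_nonneg_left ?_ (by positivity)
            exact Finset.sum_le_sum fun j _ => hterm j
        _ = (N:ℝ)⁻¹ * ((N:ℝ) * (C * (L₂ - L₁))) := by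
            rw [Finset.sum_const, Finset.card_univ, Fintype.card_fin, nsmul_eq_mul]
        _ = C * (L₂ - L₁) := by field_simp
    have key : L₂ - L₁ ≤ C * (L₂ - L₁) * (τ L₂ - t') := by
      have h1 : L₂ - L₁ ≤ g i (τ L₂) - g i t' := by linarith
      have h2 := hrep i t' (τ L₂) h0t' ht'lt.le hτ2t
      have h3 : (∫ σ in t'..(τ L₂), ⟪ℓ, F i σ⟫) ≤
          ∫ _σ in t'..(τ L₂), C * (L₂ - L₁) :=
        intervalIntegral.integral_mono_on ht'lt.le
          (hGint i t' (τ L₂) h0t' (ht'τ2.trans hτ2t) (hs.trans hsτ2) hτ2t)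
          intervalIntegrable_const hbound
      rw [intervalIntegral.integral_const, smul_eq_mul] at h3
      rw [h2] at h1
      calc L₂ - L₁ ≤ ∫ σ in t'..(τ L₂), ⟪ℓ, F i σ⟫ := h1
        _ ≤ (τ L₂ - t') * (C * (L₂ - L₁)) := h3
        _ = C * (L₂ - L₁) * (τ L₂ - t') := by ring
    have hgap : 1/C ≤ τ L₂ - t' := by
      have hpos : 0 < L₂ - L₁ := sub_pos.mpr hL12
      have h1 : 1 * (L₂ - L₁) ≤ (C * (τ L₂ - t')) * (L₂ - L₁) := by
        nlinarith [key]
      have h2 : (1:ℝ) ≤ C * (τ L₂ - t') := le_of_mul_le_mul_right h1 hpos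
      rw [div_le_iff₀ hC0]
      linarith [h2]
    linarith [hτ1t', hgap]
  -- iterate the step lemma to get a contradiction
  set ε : ℝ := Ltop - A with hεdef
  have hεpos : 0 < ε := sub_pos.mpr hcon
  set L : ℕ → ℝ := fun k => A + ε / 2 ^ k with hLdef
  have hL0 : L 0 = Ltop := by rw [hLdef]; simp [hεdef]
  have hLlt : ∀ k, A < L k := by
    intro k
    have : 0 < ε / 2 ^ k := by positivity
    rw [hLdef]; dsimp only; linarith
  have hLmono : ∀ k, L (k + 1) < L k := by
    intro k
    have h1 : ε / 2 ^ (k + 1) < ε / 2 ^ k := by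
      apply div_lt_div_of_pos_left hεpos (by positivity)
      exact pow_lt_pow_right₀ (by norm_num) (Nat.lt_succ_self k)
    rw [hLdef]; dsimp only; linarith
  have hLle : ∀ k, L k ≤ Ltop := by
    intro k
    have h1 : ε / 2 ^ k ≤ ε := by
      apply div_le_self hεpos.le
      exact one_le_pow₀ (by norm_num)
    rw [hLdef, hεdef]; dsimp only; linarith
  have main : ∀ k : ℕ, τ (L k) + (k : ℝ) / C ≤ τ (L 0) := by
    intro k
    induction k with
    | zero => simp
    | succ n ih =>
      have hstep := step (L (n + 1)) (L n) (hLlt (n + 1)) (hLmono n) (hLle n)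
      push_cast
      have : ((n:ℝ) + 1) / C = 1 / C + (n : ℝ) / C := by ring
      rw [this]
      linarith
  obtain ⟨k, hk⟩ := exists_nat_gt ((t - s) * C)
  have h1 := main k
  have h2 : s ≤ τ (L k) := (hτIcc _ (hLle k)).1
  have h3 : τ (L 0) ≤ t := (hτIcc _ (hLle 0)).2
  have h4 : t - s < (k : ℝ) / C := (lt_div_iff₀ hC0).mpr hk
  linarith

/-- Along a solution of the first-order cooperative system
with communication failures (fixed scaling), the function
`D(t) = max_{i,j} ‖x i t - x j t‖` (the diameter) is non-increasing on `[0, ∞)`. -/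
theorem diameter_antitone
    (d N : ℕ) (hN : 2 ≤ N)
    (φ : ℝ → ℝ)
    (hφ_lip : ∃ K : NNReal, LipschitzOnWith K φ (Ici 0))
    (hφ_pos : ∀ r : ℝ, 0 ≤ r → 0 < φ r)
    (M : Fin N → Fin N → ℝ → ℝ)
    (hM_meas : ∀ i j, Measurable (M i j))
    (hM_range : ∀ i j, ∀ t : ℝ, 0 ≤ t → M i j t ∈ Icc (0:ℝ) 1)
    (x : Fin N → ℝ → EuclideanSpace ℝ (Fin d))
    (hx_cont : ∀ i, ContinuousOn (x i) (Ici 0))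
    (hx_sol : ∀ i, ∀ t : ℝ, 0 ≤ t → x i t = x i 0 +
      ∫ s in (0:ℝ)..t,
        (N : ℝ)⁻¹ • ∑ j, (M i j s * φ ‖x i s - x j s‖) • (x j s - x i s)) :
    AntitoneOn (fun t : ℝ => ⨆ i, ⨆ j, ‖x i t - x j t‖) (Ici 0) := by
  obtain ⟨K, hφ_lipK⟩ := hφ_lip
  haveI : Nonempty (Fin N) := ⟨⟨0, by omega⟩⟩
  have Hne : (Finset.univ : Finset (Fin N)).Nonempty := Finset.univ_nonempty
  intro s hs t ht hst
  simp only
  have bdd1 : ∀ (u : ℝ) (i : Fin N),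
      BddAbove (Set.range fun j => ‖x i u - x j u‖) := fun u i =>
    (Set.finite_range _).bddAbove
  have bdd2 : ∀ u : ℝ, BddAbove (Set.range fun i => ⨆ j, ‖x i u - x j u‖) :=
    fun u => (Set.finite_range _).bddAbove
  obtain ⟨i, hi⟩ := exists_eq_ciSup_of_finite (f := fun i => ⨆ j, ‖x i t - x j t‖)
  obtain ⟨j, hj⟩ := exists_eq_ciSup_of_finite (f := fun j => ‖x i t - x j t‖)
  rw [← hi, ← hj]
  set v : EuclideanSpace ℝ (Fin d) := x i t - x j t with hv
  set ℓ : EuclideanSpace ℝ (Fin d) := ‖v‖⁻¹ • v with hℓ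
  have hℓ1 : ‖ℓ‖ ≤ 1 := by
    rw [hℓ, norm_smul, norm_inv, norm_norm]
    rcases eq_or_ne v 0 with h | h
    · simp [h]
    · rw [inv_mul_cancel₀ (norm_ne_zero_iff.mpr h)]
  have hℓv : ⟪ℓ, v⟫ = ‖v‖ := by
    rcases eq_or_ne v 0 with h | h
    · simp [h, hℓ]
    · rw [hℓ, real_inner_smul_left, real_inner_self_eq_norm_sq, sq]
      rw [← mul_assoc, inv_mul_cancel₀ (norm_ne_zero_iff.mpr h), one_mul]
  have hcore1 := core_mono d N hN φ K hφ_lipK hφ_pos M hM_meas hM_range x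
    hx_cont hx_sol ℓ s t hs hst Hne
  have hcore2 := core_mono d N hN φ K hφ_lipK hφ_pos M hM_meas hM_range x
    hx_cont hx_sol (-ℓ) s t hs hst Hne
  obtain ⟨a, _, ha⟩ := Finset.exists_mem_eq_sup' Hne (fun i' => ⟪ℓ, x i' s⟫)
  obtain ⟨b, _, hb⟩ := Finset.exists_mem_eq_sup' Hne (fun i' => ⟪-ℓ, x i' s⟫)
  have h1 : ⟪ℓ, x i t⟫ ≤ Finset.univ.sup' Hne (fun i' => ⟪ℓ, x i' t⟫) :=
    Finset.le_sup' (fun i' => ⟪ℓ, x i' t⟫) (Finset.mem_univ i)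
  have h2 : ⟪-ℓ, x j t⟫ ≤ Finset.univ.sup' Hne (fun i' => ⟪-ℓ, x i' t⟫) :=
    Finset.le_sup' (fun i' => ⟪-ℓ, x i' t⟫) (Finset.mem_univ j)
  have hDt : ‖v‖ = ⟪ℓ, x i t⟫ + ⟪-ℓ, x j t⟫ := by
    rw [← hℓv, hv, inner_sub_right, inner_neg_left]
    ring
  have hsum : ⟪ℓ, x a s⟫ + ⟪-ℓ, x b s⟫ = ⟪ℓ, x a s - x b s⟫ := by
    rw [inner_sub_right, inner_neg_left]
    ring
  have hinner : ⟪ℓ, x a s - x b s⟫ ≤ ‖x a s - x b s‖ := by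
    calc ⟪ℓ, x a s - x b s⟫ ≤ ‖ℓ‖ * ‖x a s - x b s‖ := real_inner_le_norm _ _
      _ ≤ 1 * ‖x a s - x b s‖ :=
          mul_le_mul_of_nonneg_right hℓ1 (norm_nonneg _)
      _ = ‖x a s - x b s‖ := one_mul _
  have hend : ‖x a s - x b s‖ ≤ ⨆ i', ⨆ j', ‖x i' s - x j' s‖ :=
    le_trans (le_ciSup (bdd1 s a) b) (le_ciSup (bdd2 s) a)
  calc ‖v‖ = ⟪ℓ, x i t⟫ + ⟪-ℓ, x j t⟫ := hDt
    _ ≤ Finset.univ.sup' Hne (fun i' => ⟪ℓ, x i' t⟫) +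
        Finset.univ.sup' Hne (fun i' => ⟪-ℓ, x i' t⟫) := add_le_add h1 h2
    _ ≤ Finset.univ.sup' Hne (fun i' => ⟪ℓ, x i' s⟫) +
        Finset.univ.sup' Hne (fun i' => ⟪-ℓ, x i' s⟫) := add_le_add hcore1 hcore2
    _ = ⟪ℓ, x a s⟫ + ⟪-ℓ, x b s⟫ := by rw [ha, hb]
    _ = ⟪ℓ, x a s - x b s⟫ := hsum
    _ ≤ ‖x a s - x b s‖ := hinner
    _ ≤ ⨆ i', ⨆ j', ‖x i' s - x j' s‖ := hend
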